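/- arXiv:2012.02429 — 10 statements merged into one kernel-verified Lean document; each statement's English description precedes it below -/
import Mathlib

section
/- (Barker–Foran) Let C ⊆ ℝ^d be a nonempty convex cone such that C ⊆ C*. Then there exists a self-dual cone K ⊆ ℝ^d, i.e. a set with K* = K, such that C ⊆ K ⊆ C*. -/
/-- The dual cone of a subset of `ℝ^d` with the standard inner product. -/
def dualCone {d : ℕ} (S : Set (Fin d → ℝ)) : Set (Fin d → ℝ) :=
  {y | ∀ x ∈ S, 0 ≤ ∑ i, y i * x i}

/-- **Barker–Foran.** If `C ⊆ ℝ^d` is a nonempty convex cone with `C ⊆ C*`,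
then there is a self-dual cone `K` with `C ⊆ K = K* ⊆ C*`. -/
theorem stmt3 {d : ℕ} (C : Set (Fin d → ℝ)) (hne : C.Nonempty)
    (hconv : Convex ℝ C) (hcone : ∀ x ∈ C, ∀ t : ℝ, 0 < t → t • x ∈ C)
    (hsub : C ⊆ dualCone C) :
    ∃ K : Set (Fin d → ℝ), dualCone K = K ∧ C ⊆ K ∧ K ⊆ dualCone C := by
  set 𝒮 : Set (Set (Fin d → ℝ)) :=
    {K | C ⊆ K ∧ ∀ x ∈ K, ∀ y ∈ K, 0 ≤ ∑ i, x i * y i} with h𝒮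
  have hC𝒮 : C ∈ 𝒮 := ⟨subset_rfl, fun x hx y hy => hsub hx y hy⟩
  obtain ⟨K, hCK0, hmaxl⟩ := zorn_subset_nonempty 𝒮 (fun c hc hchain hcne => by
    refine ⟨⋃₀ c, ⟨?_, ?_⟩, fun s hs => Set.subset_sUnion_of_mem hs⟩
    · obtain ⟨s, hs⟩ := hcne
      exact (hc hs).1.trans (Set.subset_sUnion_of_mem hs)
    · rintro x ⟨s, hs, hxs⟩ y ⟨t, ht, hyt⟩
      rcases hchain.total hs ht with h | h
      · exact (hc ht).2 x (h hxs) y hyt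
      · exact (hc hs).2 x hxs y (h hyt)) C hC𝒮
  obtain ⟨hCK, hKdual⟩ := hmaxl.prop
  have hmax : ∀ K' ∈ 𝒮, K ⊆ K' → K' ⊆ K := fun K' h h' => hmaxl.2 h h'
  have hdK : dualCone K = K := by
    apply Set.Subset.antisymm
    · intro x hx
      have hmem : K ∪ {x} ∈ 𝒮 := by
        refine ⟨hCK.trans Set.subset_union_left, ?_⟩
        rintro a (ha | rfl) b (hb | rfl)
        · exact hKdual a ha b hb
        · have := hx a ha
          calc (0:ℝ) ≤ ∑ i, b i * a i := this
          _ = ∑ i, a i * b i := by simp [mul_comm]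
        · exact hx b hb
        · exact Finset.sum_nonneg fun i _ => mul_self_nonneg _
      exact hmax (K ∪ {x}) hmem Set.subset_union_left (Or.inr rfl)
    · intro x hx y hy
      exact hKdual x hx y hy
  exact ⟨K, hdK, hCK, fun x hx y hy => hKdual x hx y (hCK hy)⟩
end

section
/- Let K_1, …, K_d ∈ M_n(ℝ), let v_1, …, v_m ∈ ℝ^d be vectors in the nonnegativity cone NC(K) (i.e. ∑_{j=1}^d (v_s)_j K_j is entrywise nonnegative for each s), and let p_1, …, p_m ≥ 0 be reals with ∑_{s=1}^m p_s v_s v_sᵀ = I_d. Then the matrices L_s := √(p_s) · ∑_{j=1}^d (v_s)_j K_j are entrywise nonnegative and satisfy ∑_{s=1}^m L_s X L_s^* = ∑_{i=1}^d K_i X K_i^* for all X ∈ M_n(ℂ). -/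
open scoped Matrix

/-- If `v 1, …, v m ∈ NC(K)` and `p` is a nonnegative vector with
`∑ s, p s • (v s) (v s)ᵀ = I_d`, then the matrices `L s = √(p s) • ∑ j, (v s) j • K j` are
entrywise nonnegative and give a Kraus representation of `X ↦ ∑ i, K i X K i^*`. -/
theorem stmt5 {n d m : ℕ} (K : Fin d → Matrix (Fin n) (Fin n) ℝ)
    (v : Fin m → Fin d → ℝ) (p : Fin m → ℝ) (hp : ∀ s, 0 ≤ p s)
    (hv : ∀ s, ∀ i j, 0 ≤ (∑ q, v s q • K q) i j)
    (hI : ∑ s, p s • Matrix.vecMulVec (v s) (v s) = (1 : Matrix (Fin d) (Fin d) ℝ)) :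
    (∀ s i j, 0 ≤ (Real.sqrt (p s) • ∑ q, v s q • K q) i j) ∧
    (∀ X : Matrix (Fin n) (Fin n) ℂ,
      ∑ s, ((Real.sqrt (p s) • ∑ q, v s q • K q).map (Complex.ofReal)) * X *
          ((Real.sqrt (p s) • ∑ q, v s q • K q).map (Complex.ofReal))ᴴ =
        ∑ q, (K q).map (Complex.ofReal) * X * ((K q).map (Complex.ofReal))ᴴ) := by
  refine ⟨fun s i j => ?_, fun X => ?_⟩
  · have := mul_nonneg (Real.sqrt_nonneg (p s)) (hv s i j)
    simpa [Matrix.smul_apply] using this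
  · set A : Fin d → Matrix (Fin n) (Fin n) ℂ := fun q => (K q).map Complex.ofReal with hA
    set B : Fin m → Matrix (Fin n) (Fin n) ℂ := fun s => ∑ q, (v s q : ℂ) • A q with hB
    have hmap : ∀ s, ((Real.sqrt (p s) • ∑ q, v s q • K q).map Complex.ofReal)
        = (Real.sqrt (p s) : ℂ) • B s := by
      intro s; ext i j
      simp [hB, hA, Matrix.map_apply, Matrix.sum_apply, Matrix.smul_apply, smul_eq_mul,
        Finset.mul_sum]
    have key : ∀ q r, (∑ s, (p s : ℂ) * ((v s q : ℂ) * (v s r : ℂ)))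
        = if q = r then 1 else 0 := by
      intro q r
      have h := congrArg (fun M : Matrix (Fin d) (Fin d) ℝ => M q r) hI
      simp only [Matrix.sum_apply, Matrix.smul_apply, Matrix.vecMulVec_apply,
        Matrix.one_apply, smul_eq_mul] at h
      have h2 : ((∑ s, p s * (v s q * v s r) : ℝ) : ℂ) = if q = r then 1 else 0 := by
        rw [h]; split <;> simp
      push_cast at h2
      exact h2
    have hBX : ∀ s, B s * X * (B s)ᴴ
        = ∑ q, ∑ r, ((v s q : ℂ) * (v s r : ℂ)) • (A q * X * (A r)ᴴ) := by
      intro s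
      rw [hB]
      simp only [Matrix.conjTranspose_sum, Matrix.conjTranspose_smul, Complex.star_def,
        Complex.conj_ofReal, Finset.sum_mul, Finset.mul_sum, Matrix.smul_mul,
        Matrix.mul_smul, smul_smul]
      rw [Finset.sum_comm]
      exact Finset.sum_congr rfl fun q _ => Finset.sum_congr rfl fun r _ => by rw [mul_comm]
    calc ∑ s, ((Real.sqrt (p s) • ∑ q, v s q • K q).map Complex.ofReal) * X *
            ((Real.sqrt (p s) • ∑ q, v s q • K q).map Complex.ofReal)ᴴ
        = ∑ s, (p s : ℂ) • (B s * X * (B s)ᴴ) := by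
          refine Finset.sum_congr rfl fun s _ => ?_
          rw [hmap]
          rw [Matrix.conjTranspose_smul]
          simp only [Matrix.smul_mul, Matrix.mul_smul, smul_smul, Complex.star_def,
            Complex.conj_ofReal]
          congr 1
          norm_cast
          exact Real.mul_self_sqrt (hp s)
      _ = ∑ s, ∑ q, ∑ r, ((p s : ℂ) * ((v s q : ℂ) * (v s r : ℂ))) • (A q * X * (A r)ᴴ) := by
          refine Finset.sum_congr rfl fun s _ => ?_
          rw [hBX]
          simp only [Finset.smul_sum, smul_smul]
      _ = ∑ q, ∑ r, (∑ s, (p s : ℂ) * ((v s q : ℂ) * (v s r : ℂ))) • (A q * X * (A r)ᴴ) := by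
          rw [Finset.sum_comm]
          refine Finset.sum_congr rfl fun q _ => ?_
          rw [Finset.sum_comm]
          refine Finset.sum_congr rfl fun r _ => ?_
          rw [Finset.sum_smul]
      _ = ∑ q, A q * X * (A q)ᴴ := by
          simp only [key, ite_smul, one_smul, zero_smul]
          simp
end

section
/- Let K_1, …, K_r ∈ M_n(ℂ) and let Φ(X) = ∑_{q=1}^r K_q X K_q^*, with Choi matrix J ∈ M_{n²}(ℂ) given by J_{(i,k),(j,l)} = Φ(E_{ij})_{kl} = ∑_{q=1}^r (K_q)_{ki} · conj((K_q)_{lj}). Then J is a completely positive matrix if and only if there exist finitely many entrywise nonnegative real matrices L_1, …, L_m ∈ M_n(ℝ) with ∑_{s=1}^m L_s X L_sᵀ = ∑_{q=1}^r K_q X K_q^* for all X ∈ M_n(ℂ). -/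
open scoped Matrix

private lemma entry_formula {n p : ℕ} (M : Fin p → Matrix (Fin n) (Fin n) ℂ)
    (X : Matrix (Fin n) (Fin n) ℂ) (k l : Fin n) :
    (∑ s, M s * X * (M s)ᴴ) k l = ∑ i, ∑ j, X i j * ∑ s, M s k i * star (M s l j) := by
  simp only [Matrix.sum_apply, Matrix.mul_apply, Matrix.conjTranspose_apply,
    Finset.sum_mul, Finset.mul_sum]
  rw [Finset.sum_comm]
  conv_rhs => rw [Finset.sum_comm]
  apply Finset.sum_congr rfl; intro j _
  rw [Finset.sum_comm]
  apply Finset.sum_congr rfl; intro i _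
  apply Finset.sum_congr rfl; intro s _
  ring

private lemma real_tr {n : ℕ} (L : Matrix (Fin n) (Fin n) ℝ) :
    (L.map Complex.ofReal)ᵀ = (L.map Complex.ofReal)ᴴ := by
  ext i j
  simp [Matrix.conjTranspose_apply, Matrix.transpose_apply, Matrix.map_apply,
    Complex.conj_ofReal]

/-- The Choi matrix `J_{(i,k),(j,l)} = ∑ q, (K q)_{k i} * conj ((K q)_{l j})`
of `Φ(X) = ∑ q, K q * X * (K q)ᴴ` is a completely positive matrix iff `Φ` admits a Kraus
representation by finitely many entrywise nonnegative real matrices. -/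
theorem stmt6 {n r : ℕ} (K : Fin r → Matrix (Fin n) (Fin n) ℂ) :
    (∃ k : ℕ, 1 ≤ k ∧ ∃ b : Fin n × Fin n → Fin k → ℝ,
        (∀ s i, 0 ≤ b s i) ∧
        ∀ s t : Fin n × Fin n,
          (∑ q, K q s.2 s.1 * star (K q t.2 t.1)) = ((∑ i, b s i * b t i : ℝ) : ℂ)) ↔
    (∃ m : ℕ, ∃ L : Fin m → Matrix (Fin n) (Fin n) ℝ,
        (∀ s i j, 0 ≤ L s i j) ∧
        ∀ X : Matrix (Fin n) (Fin n) ℂ,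
          ∑ s, (L s).map Complex.ofReal * X * ((L s).map Complex.ofReal)ᵀ =
            ∑ q, K q * X * (K q)ᴴ) := by
  constructor
  · rintro ⟨k, hk, b, hb, hchoi⟩
    refine ⟨k, fun α => Matrix.of fun x y => b (y, x) α, fun s i j => hb _ _, fun X => ?_⟩
    have htr : ∀ α : Fin k,
        ((Matrix.of fun x y => b (y, x) α : Matrix (Fin n) (Fin n) ℝ).map Complex.ofReal)ᵀ
        = ((Matrix.of fun x y => b (y, x) α : Matrix (Fin n) (Fin n) ℝ).map Complex.ofReal)ᴴ :=
      fun α => real_tr _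
    simp only [htr]
    ext k' l'
    rw [entry_formula, entry_formula]
    apply Finset.sum_congr rfl; intro i _
    apply Finset.sum_congr rfl; intro j _
    congr 1
    rw [hchoi ⟨i, k'⟩ ⟨j, l'⟩]
    push_cast
    apply Finset.sum_congr rfl; intro α _
    simp [Matrix.map_apply, Complex.conj_ofReal]
  · rintro ⟨m, L, hL, hKraus⟩
    refine ⟨m + 1, Nat.le_add_left 1 m,
      fun s => Fin.snoc (fun α => L α s.2 s.1) 0, ?_, ?_⟩
    · intro s i
      refine Fin.lastCases ?_ ?_ i
      · simp
      · intro α; simp [Fin.snoc_castSucc]; exact hL _ _ _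
    · intro s t
      have hK' : ∀ X : Matrix (Fin n) (Fin n) ℂ,
          ∑ α, (L α).map Complex.ofReal * X * ((L α).map Complex.ofReal)ᴴ =
            ∑ q, K q * X * (K q)ᴴ := by
        intro X
        rw [← hKraus X]
        exact Finset.sum_congr rfl fun α _ => by rw [real_tr]
      have h := congrFun (congrFun (hK' (Matrix.single s.1 t.1 1)) s.2) t.2
      rw [entry_formula, entry_formula] at h
      simp only [Matrix.single, Matrix.of_apply, ite_and, ite_mul, one_mul,
        zero_mul, Finset.sum_ite_irrel, Finset.sum_const_zero, Finset.sum_ite_eq, Finset.mem_univ, if_true] at h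
      rw [← h]
      rw [Fin.sum_univ_castSucc]
      simp only [Fin.snoc_castSucc, Fin.snoc_last, mul_zero, add_zero]
      push_cast
      apply Finset.sum_congr rfl; intro α _
      simp [Matrix.map_apply, Complex.conj_ofReal]
end

section
/- Say a linear map Φ on M_n(ℂ) factors positively through M_m(ℂ) if there exists a block matrix Z = (Z(i,j))_{i,j=1}^n with each block Z(i,j) ∈ M_m(ℂ) positive semidefinite, such that for all X ∈ M_n(ℂ) and all p, q: Φ(X)_{pq} = (1/m) · tr( ∑_{i,j=1}^n X_{ij} · Z(p,i) Z(q,j)^* ) (this is Φ(X) = (id ⊗ τ)(Z (X ⊗ I_m) Z^*) with τ the normalized trace on M_m(ℂ)). If Φ factors positively through M_{m₁}(ℂ) and Ψ factors positively through M_{m₂}(ℂ), then the composition Ψ ∘ Φ factors positively through M_{m₁·m₂}(ℂ). -/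
open scoped Matrix ComplexOrder

open Matrix Kronecker in
private lemma kron_conjTranspose {m₁ m₂ : ℕ} (A : Matrix (Fin m₁) (Fin m₁) ℂ)
    (B : Matrix (Fin m₂) (Fin m₂) ℂ) : (A ⊗ₖ B)ᴴ = Aᴴ ⊗ₖ Bᴴ := by
  ext i j
  simp [Matrix.conjTranspose_apply, Matrix.kroneckerMap_apply, mul_comm]

open Matrix Kronecker in
private lemma kron_posSemidef {m₁ m₂ : ℕ} {A : Matrix (Fin m₁) (Fin m₁) ℂ}
    {B : Matrix (Fin m₂) (Fin m₂) ℂ} (hA : A.PosSemidef) (hB : B.PosSemidef) :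
    (A ⊗ₖ B).PosSemidef := by
  exact hA.kronecker hB

private lemma trace_reindex {m k : Type*} [Fintype m] [Fintype k] [DecidableEq m]
    [DecidableEq k] (e : m ≃ k) (A : Matrix m m ℂ) :
    (Matrix.reindex e e A).trace = A.trace := by
  simp only [Matrix.trace, Matrix.diag, Matrix.reindex_apply, Matrix.submatrix_apply]
  exact Fintype.sum_equiv e.symm _ _ (fun i => rfl)

private lemma sum4_swap {n : ℕ} (f : Fin n → Fin n → Fin n → Fin n → ℂ) :
    ∑ p, ∑ q, ∑ i, ∑ j, f p q i j = ∑ i, ∑ j, ∑ p, ∑ q, f p q i j :=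
  calc ∑ p, ∑ q, ∑ i, ∑ j, f p q i j
      = ∑ p, ∑ i, ∑ q, ∑ j, f p q i j :=
        Finset.sum_congr rfl fun p _ => Finset.sum_comm
    _ = ∑ i, ∑ p, ∑ q, ∑ j, f p q i j := Finset.sum_comm
    _ = ∑ i, ∑ p, ∑ j, ∑ q, f p q i j := Finset.sum_congr rfl fun i _ =>
          Finset.sum_congr rfl fun p _ => Finset.sum_comm
    _ = ∑ i, ∑ j, ∑ p, ∑ q, f p q i j :=
        Finset.sum_congr rfl fun i _ => Finset.sum_comm

/-- A linear map `Φ` on `M_n(ℂ)` factors positively through `M_m(ℂ)` if there is a block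
matrix `Z = (Z i j)` with each `m×m` block positive semidefinite such that
`Φ(X) = (id ⊗ τ)(Z (X ⊗ I_m) Z^*)`, where `τ` is the normalized trace on `M_m(ℂ)`;
entrywise, `Φ(X) p q = (1/m) * tr (∑ i j, X i j • Z p i * (Z q j)ᴴ)`. -/
def FactorsPositively (n m : ℕ)
    (Φ : Matrix (Fin n) (Fin n) ℂ →ₗ[ℂ] Matrix (Fin n) (Fin n) ℂ) : Prop :=
  ∃ Z : Fin n → Fin n → Matrix (Fin m) (Fin m) ℂ,
    (∀ i j, (Z i j).PosSemidef) ∧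
    ∀ X : Matrix (Fin n) (Fin n) ℂ, ∀ p q : Fin n,
      Φ X p q = (1 / (m : ℂ)) * (∑ i, ∑ j, X i j • (Z p i * (Z q j)ᴴ)).trace

/-- If `Φ` factors positively through `M_{m₁}(ℂ)` and `Ψ` factors positively
through `M_{m₂}(ℂ)`, then `Ψ ∘ Φ` factors positively through `M_{m₁ m₂}(ℂ)`. -/
theorem stmt7 {n m₁ m₂ : ℕ}
    (Φ Ψ : Matrix (Fin n) (Fin n) ℂ →ₗ[ℂ] Matrix (Fin n) (Fin n) ℂ)
    (hΦ : FactorsPositively n m₁ Φ) (hΨ : FactorsPositively n m₂ Ψ) :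
    FactorsPositively n (m₁ * m₂) (Ψ ∘ₗ Φ) := by
  classical
  obtain ⟨Z₁, hZ₁, hΦ⟩ := hΦ
  obtain ⟨Z₂, hZ₂, hΨ⟩ := hΨ
  open Matrix Kronecker in
  refine ⟨fun r i => Matrix.reindex finProdFinEquiv finProdFinEquiv
      (∑ p, Z₁ p i ⊗ₖ Z₂ r p), ?_, ?_⟩
  · intro r i
    dsimp only
    rw [Matrix.reindex_apply]
    refine Matrix.PosSemidef.submatrix ?_ _
    exact Finset.sum_induction _ _ (fun _ _ => Matrix.PosSemidef.add)
      (Matrix.PosSemidef.zero) (fun p _ => kron_posSemidef (hZ₁ p i) (hZ₂ r p))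
  · intro X r s
    dsimp only
    -- key trace computation
    have key : ∀ i j : Fin n,
        ((Matrix.reindex finProdFinEquiv finProdFinEquiv (∑ p, Z₁ p i ⊗ₖ Z₂ r p)) *
          (Matrix.reindex finProdFinEquiv finProdFinEquiv (∑ q, Z₁ q j ⊗ₖ Z₂ s q))ᴴ).trace =
        ∑ p, ∑ q, (Z₁ p i * (Z₁ q j)ᴴ).trace * (Z₂ r p * (Z₂ s q)ᴴ).trace := by
      intro i j
      rw [Matrix.conjTranspose_reindex]
      rw [Matrix.reindex_apply, Matrix.reindex_apply, Matrix.submatrix_mul_equiv]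
      rw [show (Matrix.submatrix ((∑ p, Z₁ p i ⊗ₖ Z₂ r p) * (∑ q, Z₁ q j ⊗ₖ Z₂ s q)ᴴ)
          finProdFinEquiv.symm finProdFinEquiv.symm) =
        Matrix.reindex finProdFinEquiv finProdFinEquiv
          ((∑ p, Z₁ p i ⊗ₖ Z₂ r p) * (∑ q, Z₁ q j ⊗ₖ Z₂ s q)ᴴ) from rfl]
      rw [trace_reindex]
      rw [Matrix.conjTranspose_sum]
      simp only [kron_conjTranspose]
      rw [Finset.sum_mul_sum]
      rw [Matrix.trace_sum]
      refine Finset.sum_congr rfl fun p _ => ?_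
      rw [Matrix.trace_sum]
      refine Finset.sum_congr rfl fun q _ => ?_
      rw [← Matrix.mul_kronecker_mul, Matrix.trace_kronecker]
    simp only [LinearMap.comp_apply]
    rw [hΨ (Φ X) r s]
    have hrw : ∀ p q : Fin n, Φ X p q = (1 / (m₁ : ℂ)) *
        ∑ i, ∑ j, X i j * (Z₁ p i * (Z₁ q j)ᴴ).trace := by
      intro p q
      rw [hΦ X p q]
      congr 1
      rw [Matrix.trace_sum]
      refine Finset.sum_congr rfl fun i _ => ?_
      rw [Matrix.trace_sum]
      exact Finset.sum_congr rfl fun j _ => by rw [Matrix.trace_smul, smul_eq_mul]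
    -- rewrite both traces of sums as sums of scalars
    simp only [Matrix.trace_sum, Matrix.trace_smul, smul_eq_mul]
    simp only [key, hrw]
    rw [Nat.cast_mul]
    simp only [Finset.mul_sum, Finset.sum_mul]
    rw [sum4_swap]
    refine Finset.sum_congr rfl fun i _ => Finset.sum_congr rfl fun j _ =>
      Finset.sum_congr rfl fun p _ => Finset.sum_congr rfl fun q _ => ?_
    ring
end

section
/- Let C ∈ M_n(ℂ) be a correlation matrix (positive semidefinite with C_{ii} = 1 for all i), fix m ≥ 1, and let τ(A) = tr(A)/m denote the normalized trace on M_m(ℂ). Then the following are equivalent: (i) there exists a block matrix Z = (Z(i,j))_{i,j=1}^n with every block Z(i,j) ∈ M_m(ℂ) positive semidefinite such that for all X ∈ M_n(ℂ) and all i, j: C_{ij} X_{ij} = τ( ∑_{k,l=1}^n X_{kl} Z(i,k) Z(j,l)^* ); (ii) there exist positive semidefinite matrices Z_1, …, Z_n ∈ M_m(ℂ) with C_{ij} = τ(Z_i Z_j) for all i, j. -/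
open scoped Matrix ComplexOrder

/-- For a correlation matrix `C` (PSD with unit diagonal) and `m ≥ 1`, the
Schur product map `S_C` admits a positive factorization through `M_m(ℂ)` with normalized
trace `τ = tr/m` (via a block matrix `Z` with PSD blocks) iff there are PSD matrices
`Z 1, …, Z n ∈ M_m(ℂ)` with `C i j = τ (Z i * Z j)`. -/
theorem stmt9 {n m : ℕ} (hm : 1 ≤ m) (C : Matrix (Fin n) (Fin n) ℂ)
    (hC : C.PosSemidef) (hdiag : ∀ i, C i i = 1) :
    (∃ Z : Fin n → Fin n → Matrix (Fin m) (Fin m) ℂ,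
        (∀ i j, (Z i j).PosSemidef) ∧
        ∀ X : Matrix (Fin n) (Fin n) ℂ, ∀ i j : Fin n,
          C i j * X i j = (∑ k, ∑ l, X k l • (Z i k * (Z j l)ᴴ)).trace / (m : ℂ)) ↔
    (∃ W : Fin n → Matrix (Fin m) (Fin m) ℂ,
        (∀ i, (W i).PosSemidef) ∧
        ∀ i j, C i j = (W i * W j).trace / (m : ℂ)) := by
  constructor
  · rintro ⟨Z, hZ, hEq⟩
    refine ⟨fun i => Z i i, fun i => hZ i i, fun i j => ?_⟩
    have h := hEq (Matrix.single i j 1) i j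
    have hsum : (∑ k, ∑ l, (Matrix.single i j 1 : Matrix (Fin n) (Fin n) ℂ) k l • (Z i k * (Z j l)ᴴ))
        = Z i i * (Z j j)ᴴ := by
      simp [Matrix.single, ite_and, ite_smul]
    rw [Matrix.single_apply_same, mul_one] at h
    rw [h, hsum, (hZ j j).1.eq]
  · rintro ⟨W, hW, hEq⟩
    refine ⟨fun i k => if i = k then W i else 0, fun i k => ?_, fun X i j => ?_⟩
    · by_cases h : i = k <;> simp [h, hW k, Matrix.PosSemidef.zero]
    · have hsum : (∑ k, ∑ l, X k l •
          ((if i = k then W i else 0) * ((if j = l then W j else 0))ᴴ))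
          = X i j • (W i * (W j)ᴴ) := by
        simp [apply_ite, ite_mul, mul_ite, Finset.sum_ite_eq, smul_ite]
      rw [hsum, Matrix.trace_smul, (hW j).1.eq, smul_eq_mul, hEq i j]
      ring
end

section
/- Let K₁, K₂ ∈ M_n(ℝ) be linearly independent and suppose that ∑_{q=1}^2 (K_q)_{ij} (K_q)_{kl} ≥ 0 for all indices i, j, k, l (i.e. the Choi matrix of the map Φ(X) = K₁XK₁^* + K₂XK₂^* is entrywise nonnegative). Then there exist orthonormal vectors v, w ∈ ℝ² such that both v₁K₁ + v₂K₂ and w₁K₁ + w₂K₂ are entrywise nonnegative; consequently Φ admits a Kraus representation by finitely many entrywise nonnegative real matrices, i.e. there exist entrywise nonnegative L_1, …, L_m ∈ M_n(ℝ) with ∑_{s=1}^m L_s X L_sᵀ = K₁XK₁^* + K₂XK₂^* for all X ∈ M_n(ℂ). -/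
open scoped Matrix

lemma cross_min (S : Finset (ℝ × ℝ))
    (hdot : ∀ a ∈ S, ∀ b ∈ S, 0 ≤ a.1 * b.1 + a.2 * b.2)
    (h0 : ∀ a ∈ S, a ≠ (0, 0)) (hne : S.Nonempty) :
    ∃ a ∈ S, ∀ b ∈ S, 0 ≤ a.1 * b.2 - a.2 * b.1 := by
  classical
  induction S using Finset.induction with
  | empty => exact absurd hne (by simp)
  | @insert x T hx ih =>
    rcases T.eq_empty_or_nonempty with rfl | hTne
    · exact ⟨x, Finset.mem_insert_self _ _, by intro b hb; simp at hb; subst hb; ring_nf; exact le_refl _⟩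
    · obtain ⟨a, haT, hamin⟩ := ih
        (fun p hp q hq => hdot p (Finset.mem_insert_of_mem hp) q (Finset.mem_insert_of_mem hq))
        (fun p hp => h0 p (Finset.mem_insert_of_mem hp)) hTne
      by_cases hc : 0 ≤ a.1 * x.2 - a.2 * x.1
      · refine ⟨a, Finset.mem_insert_of_mem haT, ?_⟩
        intro b hb
        rcases Finset.mem_insert.mp hb with rfl | hbT
        · exact hc
        · exact hamin b hbT
      · refine ⟨x, Finset.mem_insert_self _ _, ?_⟩
        intro b hb
        rcases Finset.mem_insert.mp hb with rfl | hbT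
        · simp [mul_comm]
        · have hxa : 0 ≤ x.1 * a.2 - x.2 * a.1 := by nlinarith
          have hab : 0 ≤ a.1 * b.2 - a.2 * b.1 := hamin b hbT
          have hdxa : 0 ≤ x.1 * a.1 + x.2 * a.2 := by
            have := hdot x (Finset.mem_insert_self _ _) a (Finset.mem_insert_of_mem haT)
            linarith
          have hdab : 0 ≤ a.1 * b.1 + a.2 * b.2 :=
            hdot a (Finset.mem_insert_of_mem haT) b (Finset.mem_insert_of_mem hbT)
          have hane : a ≠ (0, 0) := h0 a (Finset.mem_insert_of_mem haT)
          have hpos : 0 < a.1 ^ 2 + a.2 ^ 2 := by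
            have : ¬(a.1 = 0 ∧ a.2 = 0) := by
              intro ⟨h1, h2⟩; exact hane (Prod.ext h1 h2)
            rcases not_and_or.mp this with h | h <;> positivity
          have key : (a.1 ^ 2 + a.2 ^ 2) * (x.1 * b.2 - x.2 * b.1) =
              (x.1 * a.2 - x.2 * a.1) * (a.1 * b.1 + a.2 * b.2) +
                (x.1 * a.1 + x.2 * a.2) * (a.1 * b.2 - a.2 * b.1) := by ring
          nlinarith [mul_nonneg hxa hdab, mul_nonneg hdxa hab]


lemma conjT_map (n : ℕ) (K : Matrix (Fin n) (Fin n) ℝ) :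
    (K.map Complex.ofReal)ᴴ = (K.map Complex.ofReal)ᵀ := by
  ext i j
  simp [Matrix.conjTranspose_apply, Matrix.map_apply, Matrix.transpose_apply, Complex.conj_ofReal]

lemma kraus_entry {n : ℕ} (M N P Q : Matrix (Fin n) (Fin n) ℝ)
    (h : ∀ i k j l, M i k * M j l + N i k * N j l = P i k * P j l + Q i k * Q j l)
    (X : Matrix (Fin n) (Fin n) ℂ) :
    M.map Complex.ofReal * X * (M.map Complex.ofReal)ᵀ +
      N.map Complex.ofReal * X * (N.map Complex.ofReal)ᵀ =
    P.map Complex.ofReal * X * (P.map Complex.ofReal)ᵀ +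
      Q.map Complex.ofReal * X * (Q.map Complex.ofReal)ᵀ := by
  ext i j
  simp only [Matrix.mul_apply, Matrix.transpose_apply, Matrix.map_apply, Matrix.add_apply]
  rw [← Finset.sum_add_distrib, ← Finset.sum_add_distrib]
  refine Finset.sum_congr rfl fun x _ => ?_
  rw [Finset.sum_mul, Finset.sum_mul, Finset.sum_mul, Finset.sum_mul,
    ← Finset.sum_add_distrib, ← Finset.sum_add_distrib]
  refine Finset.sum_congr rfl fun y _ => ?_
  have hc : ((M i y * M j x + N i y * N j x : ℝ) : ℂ)
      = ((P i y * P j x + Q i y * Q j x : ℝ) : ℂ) := by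
    exact_mod_cast congrArg Complex.ofReal (h i y j x)
  push_cast at hc
  linear_combination X y x * hc

/-- If `K₁, K₂ ∈ M_n(ℝ)` are linearly independent and the Choi matrix of
`Φ(X) = K₁ X K₁^* + K₂ X K₂^*` is entrywise nonnegative, then the nonnegativity cone of
`(K₁, K₂)` contains an orthonormal pair of vectors, and consequently `Φ` admits a Kraus
representation by finitely many entrywise nonnegative real matrices. -/
theorem stmt11 {n : ℕ} (K₁ K₂ : Matrix (Fin n) (Fin n) ℝ)
    (hind : LinearIndependent ℝ ![K₁, K₂])
    (hchoi : ∀ i j k l, 0 ≤ K₁ i j * K₁ k l + K₂ i j * K₂ k l) :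
    (∃ v w : Fin 2 → ℝ,
      v 0 * v 0 + v 1 * v 1 = 1 ∧
      w 0 * w 0 + w 1 * w 1 = 1 ∧
      v 0 * w 0 + v 1 * w 1 = 0 ∧
      (∀ i j, 0 ≤ v 0 * K₁ i j + v 1 * K₂ i j) ∧
      (∀ i j, 0 ≤ w 0 * K₁ i j + w 1 * K₂ i j)) ∧
    (∃ m : ℕ, ∃ L : Fin m → Matrix (Fin n) (Fin n) ℝ,
      (∀ s i j, 0 ≤ L s i j) ∧
      ∀ X : Matrix (Fin n) (Fin n) ℂ,
        ∑ s, (L s).map Complex.ofReal * X * ((L s).map Complex.ofReal)ᵀ =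
          K₁.map Complex.ofReal * X * (K₁.map Complex.ofReal)ᴴ +
            K₂.map Complex.ofReal * X * (K₂.map Complex.ofReal)ᴴ) := by
  classical
  -- the finite set of nonzero "column vectors" of the Choi data
  set f : Fin n × Fin n → ℝ × ℝ := fun p => (K₁ p.1 p.2, K₂ p.1 p.2) with hf
  set S : Finset (ℝ × ℝ) :=
    (Finset.univ.filter (fun p : Fin n × Fin n => f p ≠ (0, 0))).image f with hS
  have hmemS : ∀ b ∈ S, ∃ p : Fin n × Fin n, f p = b ∧ b ≠ (0, 0) := by
    intro b hb
    rcases Finset.mem_image.mp hb with ⟨p, hp, rfl⟩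
    exact ⟨p, rfl, (Finset.mem_filter.mp hp).2⟩
  have hdot : ∀ a ∈ S, ∀ b ∈ S, 0 ≤ a.1 * b.1 + a.2 * b.2 := by
    intro a ha b hb
    obtain ⟨p, rfl, -⟩ := hmemS a ha
    obtain ⟨q, rfl, -⟩ := hmemS b hb
    exact hchoi p.1 p.2 q.1 q.2
  have h0 : ∀ a ∈ S, a ≠ (0, 0) := fun a ha => (hmemS a ha).choose_spec.2
  have hK1ne : K₁ ≠ 0 := by
    have := hind.ne_zero 0
    simpa using this
  obtain ⟨i0, j0, hij0⟩ : ∃ i j, K₁ i j ≠ 0 := by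
    by_contra h
    push_neg at h
    exact hK1ne (by ext i j; simpa using h i j)
  have hne : S.Nonempty := by
    refine ⟨f (i0, j0), Finset.mem_image_of_mem f
      (Finset.mem_filter.mpr ⟨Finset.mem_univ _, ?_⟩)⟩
    intro h
    exact hij0 (by simpa using congrArg Prod.fst h)
  obtain ⟨a, haS, hamin⟩ := cross_min S hdot h0 hne
  obtain ⟨p0, hp0, hane⟩ := hmemS a haS
  have ha1 : a.1 = K₁ p0.1 p0.2 := by rw [← hp0]
  have ha2 : a.2 = K₂ p0.1 p0.2 := by rw [← hp0]
  have hchoia : ∀ i j, 0 ≤ a.1 * K₁ i j + a.2 * K₂ i j := by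
    intro i j
    rw [ha1, ha2]
    exact hchoi p0.1 p0.2 i j
  have hcross : ∀ i j, 0 ≤ a.1 * K₂ i j - a.2 * K₁ i j := by
    intro i j
    by_cases hz : f (i, j) = (0, 0)
    · have h1 : K₁ i j = 0 := congrArg Prod.fst hz
      have h2 : K₂ i j = 0 := congrArg Prod.snd hz
      simp [h1, h2]
    · have hb : f (i, j) ∈ S := Finset.mem_image_of_mem f
        (Finset.mem_filter.mpr ⟨Finset.mem_univ _, hz⟩)
      simpa using hamin _ hb
  have hpos : 0 < a.1 ^ 2 + a.2 ^ 2 := by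
    have : ¬(a.1 = 0 ∧ a.2 = 0) := by
      intro ⟨h1, h2⟩; exact hane (Prod.ext h1 h2)
    rcases not_and_or.mp this with h | h <;> positivity
  set r := Real.sqrt (a.1 ^ 2 + a.2 ^ 2) with hrdef
  have hr : 0 < r := Real.sqrt_pos.mpr hpos
  have hr2 : r ^ 2 = a.1 ^ 2 + a.2 ^ 2 := Real.sq_sqrt hpos.le
  set v0 : ℝ := a.1 / r with hv0
  set v1 : ℝ := a.2 / r with hv1
  have hunit : v0 ^ 2 + v1 ^ 2 = 1 := by
    rw [hv0, hv1, div_pow, div_pow, ← add_div, ← hr2,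
      div_self (pow_ne_zero _ hr.ne')]
  have hA : ∀ i j, 0 ≤ v0 * K₁ i j + v1 * K₂ i j := by
    intro i j
    have heq : v0 * K₁ i j + v1 * K₂ i j = (a.1 * K₁ i j + a.2 * K₂ i j) / r := by
      rw [hv0, hv1]; ring
    rw [heq]
    exact div_nonneg (hchoia i j) hr.le
  have hB : ∀ i j, 0 ≤ -v1 * K₁ i j + v0 * K₂ i j := by
    intro i j
    have heq : -v1 * K₁ i j + v0 * K₂ i j = (a.1 * K₂ i j - a.2 * K₁ i j) / r := by
      rw [hv0, hv1]; ring
    rw [heq]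
    exact div_nonneg (hcross i j) hr.le
  constructor
  · refine ⟨![v0, v1], ![-v1, v0], ?_, ?_, ?_, ?_, ?_⟩
    · simpa [← sq] using hunit
    · simp only [Matrix.cons_val_zero, Matrix.cons_val_one, Matrix.head_cons]
      nlinarith [hunit]
    · simp only [Matrix.cons_val_zero, Matrix.cons_val_one, Matrix.head_cons]
      ring
    · simpa using hA
    · simpa using hB
  · set A : Matrix (Fin n) (Fin n) ℝ := v0 • K₁ + v1 • K₂ with hAdef
    set B : Matrix (Fin n) (Fin n) ℝ := (-v1) • K₁ + v0 • K₂ with hBdef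
    refine ⟨2, ![A, B], ?_, ?_⟩
    · intro s i j
      fin_cases s
      · simpa [hAdef, Matrix.add_apply, Matrix.smul_apply, smul_eq_mul] using hA i j
      · simpa [hBdef, Matrix.add_apply, Matrix.smul_apply, smul_eq_mul] using hB i j
    · intro X
      rw [Fin.sum_univ_two]
      simp only [Matrix.cons_val_zero, Matrix.cons_val_one, Matrix.head_cons]
      have hABentry : ∀ i k j l, A i k * A j l + B i k * B j l
          = K₁ i k * K₁ j l + K₂ i k * K₂ j l := by
        intro i k j l
        simp only [hAdef, hBdef, Matrix.add_apply, Matrix.smul_apply, smul_eq_mul,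
          neg_smul, Matrix.neg_apply]
        linear_combination (K₁ i k * K₁ j l + K₂ i k * K₂ j l) * hunit
      rw [conjT_map, conjT_map]
      exact kraus_entry A B K₁ K₂ hABentry X
end

section
/- Let W be the 5×5 real matrix with rows (1, 2/√6, 0, 0, 1/3), (2/√6, 1, 1/2, 0, 0), (0, 1/2, 1, 1/2, 0), (0, 0, 1/2, 1, 2/√6), (1/3, 0, 0, 2/√6, 1). Then W is positive semidefinite and entrywise nonnegative (doubly nonnegative), but W is not completely positive semidefinite: there do not exist m ≥ 1 and positive semidefinite matrices A_0, …, A_4 ∈ M_m(ℂ) with tr(A_i A_j) = W_{ij} for all 0 ≤ i, j ≤ 4. -/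
open scoped ComplexOrder
open Matrix
open scoped MatrixOrder

/-- The 5×5 doubly nonnegative matrix `W` from the paper; it is the Gram matrix of the
vectors `v₀ = (1,1,1)/√3`, `v₁ = (0,1,1)/√2`, `v₂ = (−1,0,1)/√2`, `v₃ = (0,−1,1)/√2`,
`v₄ = (1,−1,1)/√3` in `ℝ³`. -/
noncomputable def Wmat : Matrix (Fin 5) (Fin 5) ℝ :=
  !![1, 2 / Real.sqrt 6, 0, 0, 1 / 3;
     2 / Real.sqrt 6, 1, 1 / 2, 0, 0;
     0, 1 / 2, 1, 1 / 2, 0;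
     0, 0, 1 / 2, 1, 2 / Real.sqrt 6;
     1 / 3, 0, 0, 2 / Real.sqrt 6, 1]

/-- A complex square matrix with `tr (Xᴴ X) = 0` is zero. -/
lemma trace_conjTranspose_mul_self_eq_zero' {m : ℕ} (X : Matrix (Fin m) (Fin m) ℂ)
    (h : (Xᴴ * X).trace = 0) : X = 0 := by
  have h1 : (Xᴴ * X).trace = ((∑ j, ∑ i, Complex.normSq (X i j) : ℝ) : ℂ) := by
    simp only [Matrix.trace, Matrix.diag, Matrix.mul_apply, Matrix.conjTranspose_apply]
    push_cast
    congr 1; ext j; congr 1; ext i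
    rw [Complex.normSq_eq_conj_mul_self]; rfl
  rw [h1] at h
  have h2 : (∑ j, ∑ i, Complex.normSq (X i j) : ℝ) = 0 := by exact_mod_cast h
  ext i j
  have hnn : ∀ j' ∈ Finset.univ, (0:ℝ) ≤ ∑ i', Complex.normSq (X i' j') := fun j' _ =>
    Finset.sum_nonneg fun i' _ => Complex.normSq_nonneg _
  have h3 := (Finset.sum_eq_zero_iff_of_nonneg hnn).mp h2 j (Finset.mem_univ j)
  have h4 := (Finset.sum_eq_zero_iff_of_nonneg
    (fun i' _ => Complex.normSq_nonneg (X i' j))).mp h3 i (Finset.mem_univ i)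
  simpa using Complex.normSq_eq_zero.mp h4

/-- Two PSD matrices with `tr (P Q) = 0` satisfy `P Q = 0`. -/
lemma psd_mul_eq_zero_of_trace {m : ℕ} {P Q : Matrix (Fin m) (Fin m) ℂ}
    (hP : P.PosSemidef) (hQ : Q.PosSemidef) (h : (P * Q).trace = 0) : P * Q = 0 := by
  classical
  set S := CFC.sqrt P with hS
  set T := CFC.sqrt Q with hT
  have hScc : Sᴴ = S := (CFC.sqrt_nonneg P).posSemidef.isHermitian
  have hTcc : Tᴴ = T := (CFC.sqrt_nonneg Q).posSemidef.isHermitian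
  have hSS : S * S = P := CFC.sqrt_mul_sqrt_self P hP.nonneg
  have hTT : T * T = Q := CFC.sqrt_mul_sqrt_self Q hQ.nonneg
  have key : ((S * T)ᴴ * (S * T)).trace = (P * Q).trace := by
    rw [Matrix.conjTranspose_mul, hScc, hTcc]
    calc (T * S * (S * T)).trace = (T * (S * S * T)).trace := by noncomm_ring
      _ = (S * S * T * T).trace := by rw [Matrix.trace_mul_comm, Matrix.mul_assoc]
      _ = (P * Q).trace := by rw [hSS, Matrix.mul_assoc, hTT]
  have hST : S * T = 0 := trace_conjTranspose_mul_self_eq_zero' _ (by rw [key, h])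
  calc P * Q = S * (S * T) * T := by rw [← hSS, ← hTT]; noncomm_ring
    _ = 0 := by rw [hST]; simp

set_option maxHeartbeats 2000000 in
/-- `W` is positive semidefinite and entrywise nonnegative (doubly
nonnegative), but not completely positive semidefinite: there are no `m ≥ 1` and positive
semidefinite `A 0, …, A 4 ∈ M_m(ℂ)` with `tr (A i * A j) = W i j` for all `i, j`. -/
theorem stmt12 :
    Wmat.PosSemidef ∧ (∀ i j, 0 ≤ Wmat i j) ∧
    ¬ ∃ m : ℕ, 1 ≤ m ∧ ∃ A : Fin 5 → Matrix (Fin m) (Fin m) ℂ,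
        (∀ i, (A i).PosSemidef) ∧ ∀ i j, (A i * A j).trace = (Wmat i j : ℂ) := by
  refine ⟨?_, ?_, ?_⟩
  · -- positive semidefiniteness
    have h2 : Real.sqrt 2 * Real.sqrt 2 = 2 := Real.mul_self_sqrt (by norm_num)
    have h3 : Real.sqrt 3 * Real.sqrt 3 = 3 := Real.mul_self_sqrt (by norm_num)
    have h2ne : Real.sqrt 2 ≠ 0 := by positivity
    have h3ne : Real.sqrt 3 ≠ 0 := by positivity
    have h6 : Real.sqrt 6 = Real.sqrt 3 * Real.sqrt 2 := by
      rw [show (6:ℝ) = 3*2 by norm_num, Real.sqrt_mul (by norm_num)]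
    set V : Matrix (Fin 3) (Fin 5) ℝ :=
      !![(Real.sqrt 3)⁻¹, 0, -(Real.sqrt 2)⁻¹, 0, (Real.sqrt 3)⁻¹;
         (Real.sqrt 3)⁻¹, (Real.sqrt 2)⁻¹, 0, -(Real.sqrt 2)⁻¹, -(Real.sqrt 3)⁻¹;
         (Real.sqrt 3)⁻¹, (Real.sqrt 2)⁻¹, (Real.sqrt 2)⁻¹, (Real.sqrt 2)⁻¹, (Real.sqrt 3)⁻¹]
      with hV
    have hfact : Wmat = Vᴴ * V := by
      ext i j
      fin_cases i <;> fin_cases j <;>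
        simp [hV, Wmat, Matrix.mul_apply, Fin.sum_univ_three, Matrix.conjTranspose_apply,
          Matrix.vecHead, Matrix.vecTail, h6] <;>
        field_simp <;> nlinarith [h2, h3, Real.sqrt_nonneg 2, Real.sqrt_nonneg 3]
    rw [hfact]
    exact Matrix.posSemidef_conjTranspose_mul_self V
  · -- entrywise nonnegativity
    intro i j
    fin_cases i <;> fin_cases j <;> norm_num [Wmat, Matrix.vecHead, Matrix.vecTail] <;> positivity
  · rintro ⟨m, hm, A, hA, htr⟩
    set t : ℂ := ((Real.sqrt 6 : ℝ) : ℂ) with ht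
    have hs6 : Real.sqrt 6 * Real.sqrt 6 = 6 := Real.mul_self_sqrt (by norm_num)
    have htt : t * t = 6 := by rw [ht]; exact_mod_cast hs6
    have herm : ∀ i, (A i)ᴴ = A i := fun i => (hA i).isHermitian
    -- the two linear relations coming from the kernel of `W`
    have hX2 : t • A 0 + (2:ℂ) • A 3 = (2:ℂ) • A 1 + t • A 4 := by
      set X : Matrix (Fin m) (Fin m) ℂ := t • A 0 - (2:ℂ) • A 1 + (2:ℂ) • A 3 - t • A 4 with hX
      have hXh : Xᴴ = X := by
        simp [hX, conjTranspose_sub, conjTranspose_add, conjTranspose_smul, herm, ht,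
          Complex.star_def, Complex.conj_ofReal]
      have hXtr : (Xᴴ * X).trace = 0 := by
        rw [hXh, hX]
        simp only [sub_mul, add_mul, mul_sub, mul_add, smul_mul_assoc, mul_smul_comm, smul_smul,
          trace_sub, trace_add, trace_smul, htr]
        simp [Wmat]
        field_simp
        linear_combination (4*t) * htt
      have h0 : X = 0 := trace_conjTranspose_mul_self_eq_zero' X hXtr
      rw [hX] at h0
      calc t • A 0 + (2:ℂ) • A 3
          = (t • A 0 - (2:ℂ) • A 1 + (2:ℂ) • A 3 - t • A 4) + ((2:ℂ) • A 1 + t • A 4) := by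
            module
        _ = (2:ℂ) • A 1 + t • A 4 := by rw [h0, zero_add]
    have hX1 : (4:ℂ) • A 1 + (4:ℂ) • A 3 = (4:ℂ) • A 2 + t • A 0 + t • A 4 := by
      set Y : Matrix (Fin m) (Fin m) ℂ :=
        (4:ℂ) • A 1 + (4:ℂ) • A 3 - (4:ℂ) • A 2 - t • A 0 - t • A 4 with hY
      have hYh : Yᴴ = Y := by
        simp [hY, conjTranspose_sub, conjTranspose_add, conjTranspose_smul, herm, ht,
          Complex.star_def, Complex.conj_ofReal]
      have hYtr : (Yᴴ * Y).trace = 0 := by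
        rw [hYh, hY]
        simp only [sub_mul, add_mul, mul_sub, mul_add, smul_mul_assoc, mul_smul_comm, smul_smul,
          trace_sub, trace_add, trace_smul, htr]
        simp [Wmat]
        field_simp
        have hs6c : ((Real.sqrt 6 : ℝ) : ℂ) * ((Real.sqrt 6 : ℝ) : ℂ) = 6 := by exact_mod_cast hs6
        linear_combination (16*((Real.sqrt 6 : ℝ) : ℂ)) * hs6c
      have h0 : Y = 0 := trace_conjTranspose_mul_self_eq_zero' Y hYtr
      rw [hY] at h0
      calc (4:ℂ) • A 1 + (4:ℂ) • A 3
          = ((4:ℂ) • A 1 + (4:ℂ) • A 3 - (4:ℂ) • A 2 - t • A 0 - t • A 4)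
            + ((4:ℂ) • A 2 + t • A 0 + t • A 4) := by module
        _ = (4:ℂ) • A 2 + t • A 0 + t • A 4 := by rw [h0, zero_add]
    -- zero products forced by the zero entries of `W`
    have hz : ∀ i j : Fin 5, Wmat i j = 0 → A i * A j = 0 := fun i j h =>
      psd_mul_eq_zero_of_trace (hA i) (hA j) (by rw [htr i j, h, Complex.ofReal_zero])
    have h02 : A 0 * A 2 = 0 := hz 0 2 (by simp [Wmat])
    have h42 : A 4 * A 2 = 0 := hz 4 2 (by simp [Wmat])
    have h13 : A 1 * A 3 = 0 := hz 1 3 (by simp [Wmat])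
    have h14 : A 1 * A 4 = 0 := hz 1 4 (by simp [Wmat])
    have h30 : A 3 * A 0 = 0 := hz 3 0 (by simp [Wmat])
    have h31 : A 3 * A 1 = 0 := hz 3 1 (by simp [Wmat])
    -- consequences of the relations
    have d2 : t • (A 1 * A 0) = (2:ℂ) • (A 1 * A 1) := by
      have h := congrArg (fun Z => A 1 * Z) hX2
      simpa only [mul_add, mul_smul_comm, h13, h14, smul_zero, add_zero] using h
    have d1 : (4:ℂ) • (A 1 * A 1) = (4:ℂ) • (A 1 * A 2) + t • (A 1 * A 0) := by
      have h := congrArg (fun Z => A 1 * Z) hX1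
      simpa only [mul_add, mul_smul_comm, h13, h14, smul_zero, add_zero] using h
    have e1 : (2:ℂ) • (A 1 * A 1) = (4:ℂ) • (A 1 * A 2) := by
      have h4 : (4:ℂ) • (A 1 * A 1) = (4:ℂ) • (A 1 * A 2) + (2:ℂ) • (A 1 * A 1) := by
        rw [← d2]; exact d1
      calc (2:ℂ) • (A 1 * A 1) = (4:ℂ) • (A 1 * A 1) - (2:ℂ) • (A 1 * A 1) := by module
        _ = (4:ℂ) • (A 1 * A 2) := by rw [h4]; module
    have d3 : (2:ℂ) • (A 3 * A 3) = t • (A 3 * A 4) := by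
      have h := congrArg (fun Z => A 3 * Z) hX2
      simpa only [mul_add, mul_smul_comm, h30, h31, smul_zero, add_zero, zero_add] using h
    have d4 : (4:ℂ) • (A 3 * A 3) = (4:ℂ) • (A 3 * A 2) + t • (A 3 * A 4) := by
      have h := congrArg (fun Z => A 3 * Z) hX1
      simpa only [mul_add, mul_smul_comm, h30, h31, smul_zero, add_zero, zero_add] using h
    have e3 : (2:ℂ) • (A 3 * A 3) = (4:ℂ) • (A 3 * A 2) := by
      have h4 : (4:ℂ) • (A 3 * A 3) = (4:ℂ) • (A 3 * A 2) + (2:ℂ) • (A 3 * A 3) := by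
        rw [d3]; exact d4
      calc (2:ℂ) • (A 3 * A 3) = (4:ℂ) • (A 3 * A 3) - (2:ℂ) • (A 3 * A 3) := by module
        _ = (4:ℂ) • (A 3 * A 2) := by rw [h4]; module
    have d5 : (2:ℂ) • (A 3 * A 2) = (2:ℂ) • (A 1 * A 2) := by
      have h := congrArg (fun Z => Z * A 2) hX2
      simpa only [add_mul, smul_mul_assoc, h02, h42, smul_zero, add_zero, zero_add] using h
    have e5 : (4:ℂ) • (A 3 * A 2) = (4:ℂ) • (A 1 * A 2) := by
      calc (4:ℂ) • (A 3 * A 2) = (2:ℂ) • ((2:ℂ) • (A 3 * A 2)) := by module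
        _ = (2:ℂ) • ((2:ℂ) • (A 1 * A 2)) := by rw [d5]
        _ = (4:ℂ) • (A 1 * A 2) := by module
    have key : (2:ℂ) • (A 1 * A 1) = (2:ℂ) • (A 3 * A 3) := by
      rw [e1, e3, e5]
    have hsq : A 1 * A 1 = A 3 * A 3 := smul_right_injective _ two_ne_zero key
    have hSS : (A 1 * A 1) * (A 1 * A 1) = 0 := by
      calc (A 1 * A 1) * (A 1 * A 1) = (A 1 * A 1) * (A 3 * A 3) := by rw [hsq]
        _ = A 1 * ((A 1 * A 3) * A 3) := by noncomm_ring
        _ = 0 := by rw [h13]; simp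
    have hS0 : A 1 * A 1 = 0 := by
      apply trace_conjTranspose_mul_self_eq_zero'
      have hh : (A 1 * A 1)ᴴ = A 1 * A 1 := by rw [conjTranspose_mul, herm]
      rw [hh, hSS, trace_zero]
    have h11 := htr 1 1
    rw [hS0, trace_zero] at h11
    have : Wmat 1 1 = 1 := by norm_num [Wmat, Matrix.vecHead, Matrix.vecTail]
    rw [this] at h11
    norm_num at h11
end

section
/- Let unit vectors u_1, …, u_n and v_1, …, v_n in ℂ^d form a bipartite unextendible product basis on ℂ^d ⊗ ℂ^d. Then for every subset S ⊆ {1, …, n} with |S| = n − d + 1, the vectors {u_i : i ∈ S} span ℂ^d (and by symmetry the same holds for {v_i : i ∈ S}). -/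
open Submodule in
lemma upb_aux {d n : ℕ} (w : Fin n → EuclideanSpace ℂ (Fin d)) (T : Finset (Fin n))
    (hT : T.card < d) :
    ∃ y : EuclideanSpace ℂ (Fin d), y ≠ 0 ∧ ∀ i ∈ T, (inner ℂ (w i) y : ℂ) = 0 := by
  classical
  set F : Finset (EuclideanSpace ℂ (Fin d)) := T.image w with hF
  have hcoe : (F : Set (EuclideanSpace ℂ (Fin d))) = w '' T := Finset.coe_image
  have hlt : Submodule.span ℂ (F : Set (EuclideanSpace ℂ (Fin d))) < ⊤ := by
    apply span_lt_top_of_card_lt_finrank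
    have : (F : Set (EuclideanSpace ℂ (Fin d))).toFinset.card = F.card := by simp
    rw [this, finrank_euclideanSpace_fin]
    exact lt_of_le_of_lt (Finset.card_image_le) hT
  set K := Submodule.span ℂ (F : Set (EuclideanSpace ℂ (Fin d)))
  have hne : Kᗮ ≠ ⊥ := fun hb => hlt.ne (Submodule.orthogonal_eq_bot_iff.mp hb)
  obtain ⟨y, hyK, hy0⟩ := Submodule.exists_mem_ne_zero_of_ne_bot hne
  refine ⟨y, hy0, fun i hi => ?_⟩
  exact (Submodule.mem_orthogonal K y).mp hyK _
    (Submodule.subset_span (by rw [hcoe]; exact Set.mem_image_of_mem w hi))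

lemma upb_main {d n : ℕ} (u v : Fin n → EuclideanSpace ℂ (Fin d))
    (hupb : ∀ x y : EuclideanSpace ℂ (Fin d), x ≠ 0 → y ≠ 0 →
      ∃ i, (inner ℂ (u i) x : ℂ) * (inner ℂ (v i) y : ℂ) ≠ 0)
    (S : Finset (Fin n)) (hS : S.card = n - d + 1) :
    Submodule.span ℂ (u '' (S : Set (Fin n))) = ⊤ := by
  classical
  have hSn : S.card ≤ n := by simpa using S.card_le_card (Finset.subset_univ S)
  have hd : 1 ≤ d := by omega
  by_contra h
  have hne : (Submodule.span ℂ (u '' (S : Set (Fin n))))ᗮ ≠ ⊥ :=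
    fun hb => h (Submodule.orthogonal_eq_bot_iff.mp hb)
  obtain ⟨x, hxK, hx0⟩ := Submodule.exists_mem_ne_zero_of_ne_bot hne
  have hxorth : ∀ i ∈ S, (inner ℂ (u i) x : ℂ) = 0 := fun i hi =>
    (Submodule.mem_orthogonal _ x).mp hxK _
      (Submodule.subset_span (Set.mem_image_of_mem u hi))
  have hTcard : Sᶜ.card < d := by
    have := Finset.card_compl S
    simp only [Fintype.card_fin] at this
    omega
  obtain ⟨y, hy0, hyorth⟩ := upb_aux v Sᶜ hTcard
  obtain ⟨i, hi⟩ := hupb x y hx0 hy0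
  by_cases hiS : i ∈ S
  · exact hi (by rw [hxorth i hiS, zero_mul])
  · exact hi (by rw [hyorth i (Finset.mem_compl.mpr hiS), mul_zero])

/-- If unit vectors `u i, v i ∈ ℂ^d` (`i = 1, …, n`) form a bipartite
unextendible product basis on `ℂ^d ⊗ ℂ^d`, then for every subset `S` of the indices with
`|S| = n - d + 1`, the vectors `{u i : i ∈ S}` span `ℂ^d`, and likewise for `{v i : i ∈ S}`. -/
theorem stmt13 {d n : ℕ} (u v : Fin n → EuclideanSpace ℂ (Fin d))
    (hu : ∀ i, ‖u i‖ = 1) (hv : ∀ i, ‖v i‖ = 1)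
    (horth : ∀ i j, i ≠ j → (inner ℂ (u i) (u j) : ℂ) * (inner ℂ (v i) (v j) : ℂ) = 0)
    (hupb : ∀ x y : EuclideanSpace ℂ (Fin d), x ≠ 0 → y ≠ 0 →
      ∃ i, (inner ℂ (u i) x : ℂ) * (inner ℂ (v i) y : ℂ) ≠ 0) :
    ∀ S : Finset (Fin n), S.card = n - d + 1 →
      Submodule.span ℂ (u '' (S : Set (Fin n))) = ⊤ ∧
        Submodule.span ℂ (v '' (S : Set (Fin n))) = ⊤ := by
  intro S hS
  refine ⟨upb_main u v hupb S hS, upb_main v u ?_ S hS⟩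
  intro x y hx hy
  obtain ⟨i, hi⟩ := hupb y x hy hx
  exact ⟨i, fun h => hi (by rw [mul_comm] at h; exact h)⟩
end

section
/- Let unit vectors u_1, …, u_n and v_1, …, v_n in ℂ^d form a bipartite unextendible product basis on ℂ^d ⊗ ℂ^d. Then n ≥ 2d − 1. -/
lemma exists_orth {d n : ℕ} (w : Fin n → EuclideanSpace ℂ (Fin d)) (s : Finset (Fin n))
    (hs : s.card < d) :
    ∃ x : EuclideanSpace ℂ (Fin d), x ≠ 0 ∧ ∀ i ∈ s, (inner ℂ (w i) x : ℂ) = 0 := by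
  classical
  set K : Submodule ℂ (EuclideanSpace ℂ (Fin d)) :=
    Submodule.span ℂ (↑(s.image w) : Set (EuclideanSpace ℂ (Fin d))) with hK
  have hfr : Module.finrank ℂ K ≤ s.card := by
    refine le_trans ?_ (Finset.card_image_le (f := w) (s := s))
    have := finrank_span_le_card (R := ℂ) (↑(s.image w) : Set (EuclideanSpace ℂ (Fin d)))
    simpa using this
  have hKne : K ≠ ⊤ := by
    intro h
    have : Module.finrank ℂ K = d := by
      rw [h]; simpa using finrank_euclideanSpace (𝕜 := ℂ) (n := Fin d)
    omega
  have hbot : Kᗮ ≠ ⊥ := fun h => hKne (Submodule.orthogonal_eq_bot_iff.mp h)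
  obtain ⟨x, hxK, hx0⟩ := Submodule.exists_mem_ne_zero_of_ne_bot hbot
  refine ⟨x, hx0, fun i hi => ?_⟩
  exact (Submodule.mem_orthogonal K x).mp hxK (w i)
    (Submodule.subset_span (by simp; exact ⟨i, hi, rfl⟩))


/-- A bipartite unextendible product basis on `ℂ^d ⊗ ℂ^d` of size `n`
satisfies `n ≥ 2d − 1`. -/
theorem stmt14 {d n : ℕ} (u v : Fin n → EuclideanSpace ℂ (Fin d))
    (hu : ∀ i, ‖u i‖ = 1) (hv : ∀ i, ‖v i‖ = 1)
    (horth : ∀ i j, i ≠ j → (inner ℂ (u i) (u j) : ℂ) * (inner ℂ (v i) (v j) : ℂ) = 0)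
    (hupb : ∀ x y : EuclideanSpace ℂ (Fin d), x ≠ 0 → y ≠ 0 →
      ∃ i, (inner ℂ (u i) x : ℂ) * (inner ℂ (v i) y : ℂ) ≠ 0) :
    2 * d - 1 ≤ n := by
  classical
  rcases Nat.eq_zero_or_pos d with hd | hd
  · simp [hd]
  by_contra hcon
  push_neg at hcon
  have hn : n ≤ 2 * d - 2 := by omega
  set s₁ : Finset (Fin n) := Finset.univ.filter (fun i : Fin n => (i : ℕ) < d - 1) with hs₁
  set s₂ : Finset (Fin n) := Finset.univ.filter (fun i : Fin n => ¬ (i : ℕ) < d - 1) with hs₂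
  have hc₁ : s₁.card < d := by
    have : s₁.card ≤ (Finset.range (d - 1)).card := by
      refine Finset.card_le_card_of_injOn (fun i => (i : ℕ)) ?_ ?_
      · intro i hi
        simp only [hs₁, Finset.mem_coe, Finset.mem_filter] at hi
        simpa using hi.2
      · intro a _ b _ hab
        exact Fin.ext hab
    simp at this; omega
  have hc₂ : s₂.card < d := by
    have : s₂.card ≤ (Finset.range (d - 1)).card := by
      refine Finset.card_le_card_of_injOn (fun i => (i : ℕ) - (d - 1)) ?_ ?_
      · intro i hi
        simp only [hs₂, Finset.mem_coe, Finset.mem_filter] at hi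
        have := i.isLt
        simp only [Finset.mem_coe, Finset.mem_range]
        omega
      · intro a ha b hb hab
        simp only [hs₂, Finset.coe_filter, Set.mem_setOf_eq] at ha hb
        apply Fin.ext
        simp only at hab
        omega
    simp at this; omega
  obtain ⟨x, hx0, hx⟩ := exists_orth u s₁ hc₁
  obtain ⟨y, hy0, hy⟩ := exists_orth v s₂ hc₂
  obtain ⟨i, hi⟩ := hupb x y hx0 hy0
  by_cases h : (i : ℕ) < d - 1
  · exact hi (by rw [hx i (by simp [hs₁, h]), zero_mul])
  · exact hi (by rw [hy i (by simp [hs₂]; omega), mul_zero])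
end

section
/- Let C ∈ M_5(ℂ) be positive semidefinite with C_{ii} = 1 for all i and rank(C) = 3, and suppose that for all i ≠ j (indices taken modulo 5): C_{ij} = 0 if j ≡ i ± 1 (mod 5), and C_{ij} ≠ 0 if j ≡ i ± 2 (mod 5); that is, the orthogonality graph of C is the 5-cycle, the orthogonality graph of a minimal unextendible product basis in ℂ³ ⊗ ℂ³. Then C is not completely positive semidefinite: there do not exist m ≥ 1 and positive semidefinite matrices A_1, …, A_5 ∈ M_m(ℂ) with tr(A_i A_j) = C_{ij} for all i, j. -/
open scoped ComplexOrder

open scoped Matrix in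
/-- Frobenius: if `tr(Mᴴ M) = 0` then `M = 0`. -/
private lemma stmt17.frob {k : ℕ} (M : Matrix (Fin k) (Fin k) ℂ)
    (h : (Mᴴ * M).trace = 0) : M = 0 := by
  have key : ∀ j, (Mᴴ * M) j j = dotProduct (star fun i => M i j) (fun i => M i j) := by
    intro j
    simp [Matrix.mul_apply, Matrix.conjTranspose_apply, dotProduct]
  have h' : ∑ j, (Mᴴ * M) j j = 0 := h
  have hz : ∀ j ∈ Finset.univ, (Mᴴ * M) j j = 0 := by
    rw [← Finset.sum_eq_zero_iff_of_nonneg]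
    · exact h'
    · intro x _
      rw [key]
      exact dotProduct_star_self_nonneg _
  ext i j
  have h2 := (key j) ▸ hz j (Finset.mem_univ j)
  have h3 := dotProduct_star_self_eq_zero.mp h2
  simpa using congrFun h3 i

open scoped Matrix MatrixOrder in
/-- PSD orthogonality: `tr(AB) = 0` implies `AB = 0` for PSD `A, B`. -/
private lemma stmt17.mul_eq_zero_of_trace {k : ℕ} {A B : Matrix (Fin k) (Fin k) ℂ}
    (hA : A.PosSemidef) (hB : B.PosSemidef) (h : (A * B).trace = 0) : A * B = 0 := by
  set P := CFC.sqrt A with hPdef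
  set S := CFC.sqrt B with hSdef
  have hPP : P * P = A := CFC.sqrt_mul_sqrt_self A hA.nonneg
  have hSS : S * S = B := CFC.sqrt_mul_sqrt_self B hB.nonneg
  have hPH : Pᴴ = P := (Matrix.nonneg_iff_posSemidef.mp (CFC.sqrt_nonneg A)).1
  have hSH : Sᴴ = S := (Matrix.nonneg_iff_posSemidef.mp (CFC.sqrt_nonneg B)).1
  have key : ((P * S)ᴴ * (P * S)).trace = 0 := by
    rw [Matrix.conjTranspose_mul, hPH, hSH]
    calc (S * P * (P * S)).trace = (S * (P * P * S)).trace := by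
          rw [Matrix.mul_assoc, Matrix.mul_assoc]
      _ = (P * P * S * S).trace := by rw [Matrix.trace_mul_comm]
      _ = (A * B).trace := by rw [Matrix.mul_assoc, hPP, hSS]
      _ = 0 := h
  have hps : P * S = 0 := stmt17.frob _ key
  rw [← hPP, ← hSS, Matrix.mul_assoc, ← Matrix.mul_assoc P S S, hps, Matrix.zero_mul,
    Matrix.mul_zero]

open scoped Matrix in
/-- The span lemma: under the rank-3 assumption, `A u` lies in the span of
`A p, A q, A r` whenever the latter are linearly independent. -/
private lemma stmt17.span_lemma {k : ℕ} (C : Matrix (Fin 5) (Fin 5) ℂ) (hrank : C.rank = 3)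
    (A : Fin 5 → Matrix (Fin k) (Fin k) ℂ) (hA : ∀ i, (A i).PosSemidef)
    (hAtr : ∀ i j, (A i * A j).trace = C i j)
    (p q r u : Fin 5) (hpq : C p q = 0) (hpr : C p r = 0)
    (hpp : C p p = 1) (hqq : C q q = 1) (hrr : C r r = 1)
    (ht : 1 - C q r * C q r ≠ 0) :
    ∃ a b g : ℂ, A u = a • A p + b • A q + g • A r := by
  have hsym : ∀ i j, C i j = C j i := fun i j => by
    rw [← hAtr, ← hAtr, Matrix.trace_mul_comm]
  set φ : (Fin 5 → ℂ) →ₗ[ℂ] Matrix (Fin k) (Fin k) ℂ :=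
    { toFun := fun x => ∑ j, x j • A j
      map_add' := fun x y => by simp [add_smul, Finset.sum_add_distrib]
      map_smul' := fun c x => by simp [smul_smul, Finset.smul_sum] } with hφdef
  have hφ : ∀ x : Fin 5 → ℂ, φ x = ∑ j, x j • A j := fun _ => rfl
  have htr : ∀ (i : Fin 5) (x : Fin 5 → ℂ),
      (A i * φ x).trace = C.mulVec x i := by
    intro i x
    rw [hφ, Matrix.mul_sum, Matrix.trace_sum]
    simp only [mul_smul_comm, Matrix.trace_smul, smul_eq_mul, hAtr]
    simp [Matrix.mulVec, dotProduct, mul_comm]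
  have hker : ∀ x : Fin 5 → ℂ, φ x = 0 ↔ C.mulVec x = 0 := by
    intro x
    constructor
    · intro h
      funext i
      have := htr i x
      rw [h, Matrix.mul_zero, Matrix.trace_zero] at this
      exact this.symm
    · intro h
      have hct : ((φ x)ᴴ * φ x).trace = 0 := by
        have hconj : (φ x)ᴴ = ∑ j, star (x j) • A j := by
          rw [hφ, Matrix.conjTranspose_sum]
          refine Finset.sum_congr rfl fun j _ => ?_
          rw [Matrix.conjTranspose_smul, (hA j).1]
        rw [hconj, Finset.sum_mul, Matrix.trace_sum]
        have : ∀ j, ((star (x j) • A j) * φ x).trace = star (x j) * C.mulVec x j := by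
          intro j
          rw [Matrix.smul_mul, Matrix.trace_smul, smul_eq_mul, htr]
        simp only [this, h, Pi.zero_apply, mul_zero, Finset.sum_const_zero]
      exact stmt17.frob _ hct
  have hsingle : ∀ v : Fin 5, φ (Pi.single v 1) = A v := by
    intro v
    rw [hφ]
    simp [Pi.single_apply, ite_smul]
  have hkerφ : LinearMap.ker φ = LinearMap.ker C.mulVecLin := by
    ext x
    rw [LinearMap.mem_ker, LinearMap.mem_ker, Matrix.mulVecLin_apply]
    exact hker x
  have h5 : Module.finrank ℂ (Fin 5 → ℂ) = 5 := Module.finrank_fin_fun ℂ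
  have hrank' : Module.finrank ℂ (LinearMap.range C.mulVecLin) = 3 := hrank
  have h1 := LinearMap.finrank_range_add_finrank_ker φ
  have h2 := LinearMap.finrank_range_add_finrank_ker C.mulVecLin
  rw [hkerφ, h5] at h1
  rw [h5, hrank'] at h2
  have hrankφ : Module.finrank ℂ (LinearMap.range φ) = 3 := by omega
  have hqp : C q p = 0 := (hsym q p).trans hpq
  have hrp : C r p = 0 := (hsym r p).trans hpr
  have hrq : C r q = C q r := hsym r q
  have hind : LinearIndependent ℂ ![A p, A q, A r] := by
    rw [Fintype.linearIndependent_iff]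
    intro g hg
    have hsum : g 0 • A p + g 1 • A q + g 2 • A r = 0 := by
      simpa [Fin.sum_univ_three] using hg
    have e : ∀ m : Fin 5, g 0 * C m p + g 1 * C m q + g 2 * C m r = 0 := by
      intro m
      have : (A m * (g 0 • A p + g 1 • A q + g 2 • A r)).trace
          = g 0 * C m p + g 1 * C m q + g 2 * C m r := by
        simp [Matrix.mul_add, mul_smul_comm, hAtr]
      rw [hsum, Matrix.mul_zero, Matrix.trace_zero] at this
      linear_combination -this
    have ep := e p
    rw [hpp, hpq, hpr, mul_one, mul_zero, mul_zero, add_zero, add_zero] at ep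
    have eq' := e q
    rw [ep, hqq, zero_mul, zero_add, mul_one] at eq'
    have er := e r
    rw [ep, hrp, hrq, hrr, zero_mul, zero_add, mul_one] at er
    have hg2 : g 2 * (1 - C q r * C q r) = 0 := by linear_combination er - C q r * eq'
    have hg2' : g 2 = 0 := by
      rcases mul_eq_zero.mp hg2 with h | h
      · exact h
      · exact absurd h ht
    have hg1 : g 1 = 0 := by
      rw [hg2', zero_mul, add_zero] at eq'
      exact eq'
    intro i
    fin_cases i
    · exact ep
    · exact hg1
    · exact hg2'
  have hle : Submodule.span ℂ (Set.range ![A p, A q, A r]) ≤ LinearMap.range φ := by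
    rw [Submodule.span_le]
    rintro x ⟨i, rfl⟩
    fin_cases i
    · exact ⟨Pi.single p 1, hsingle p⟩
    · exact ⟨Pi.single q 1, hsingle q⟩
    · exact ⟨Pi.single r 1, hsingle r⟩
  have hW : Submodule.span ℂ (Set.range ![A p, A q, A r]) = LinearMap.range φ := by
    apply Submodule.eq_of_le_of_finrank_le hle
    rw [hrankφ, finrank_span_eq_card hind]
    simp
  have hmem : A u ∈ Submodule.span ℂ (Set.range ![A p, A q, A r]) := by
    rw [hW]
    exact ⟨Pi.single u 1, hsingle u⟩
  obtain ⟨c, hc⟩ := (Submodule.mem_span_range_iff_exists_fun ℂ).mp hmem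
  refine ⟨c 0, c 1, c 2, ?_⟩
  rw [← hc]
  simp [Fin.sum_univ_three]

/-- The key algebraic lemma: from the expansion of `X` and the pentagon
orthogonalities, `Q * R` is a scalar multiple of `Q * Q`. -/
private lemma stmt17.key {k : ℕ} (P Q R X : Matrix (Fin k) (Fin k) ℂ) (a b g : ℂ)
    (hX : X = a • P + b • Q + g • R)
    (hQP : Q * P = 0) (hQX : Q * X = 0)
    (hQQ : (Q * Q).trace = 1) (hRR : (R * R).trace = 1)
    (hPR : (P * R).trace = 0)
    (hXR : (X * R).trace ≠ 0) :
    Q * R = (Q * R).trace • (Q * Q) := by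
  set t := (Q * R).trace with htdef
  have h1 : b • (Q * Q) + g • (Q * R) = 0 := by
    have := hQX
    rw [hX, Matrix.mul_add, Matrix.mul_add, Matrix.mul_smul, Matrix.mul_smul, Matrix.mul_smul,
      hQP, smul_zero, zero_add] at this
    exact this
  have h2 : b + g * t = 0 := by
    have := congrArg Matrix.trace h1
    rwa [Matrix.trace_add, Matrix.trace_smul, Matrix.trace_smul, smul_eq_mul, smul_eq_mul,
      hQQ, mul_one, Matrix.trace_zero] at this
  have h3 : (X * R).trace = b * t + g := by
    rw [hX, Matrix.add_mul, Matrix.add_mul, Matrix.smul_mul, Matrix.smul_mul, Matrix.smul_mul,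
      Matrix.trace_add, Matrix.trace_add, Matrix.trace_smul, Matrix.trace_smul,
      Matrix.trace_smul, smul_eq_mul, smul_eq_mul, smul_eq_mul, hPR, hRR, mul_zero, mul_one,
      zero_add]
  have hg : g ≠ 0 := by
    intro hg0
    rw [hg0, zero_mul, add_zero] at h2
    rw [h2, zero_mul, hg0, add_zero] at h3
    exact hXR h3
  have h4 : g • (Q * R) = (g * t) • (Q * Q) := by
    have hb : b = -(g * t) := by linear_combination h2
    rw [hb] at h1
    have := h1
    rw [neg_smul, neg_add_eq_zero] at this
    exact this.symm
  have := congrArg (fun M => g⁻¹ • M) h4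
  simpa [smul_smul, inv_mul_cancel₀ hg, ← mul_assoc] using this

open scoped Matrix in
/-- `1 - C q r ^ 2 ≠ 0` whenever there is a witness `u` with `C u q ≠ 0`, `C u r = 0`. -/
private lemma stmt17.one_sub_sq {k : ℕ} (C : Matrix (Fin 5) (Fin 5) ℂ)
    (A : Fin 5 → Matrix (Fin k) (Fin k) ℂ) (hA : ∀ i, (A i).PosSemidef)
    (hAtr : ∀ i j, (A i * A j).trace = C i j)
    (q r u : Fin 5) (hqq : C q q = 1) (hrr : C r r = 1)
    (huq : C u q ≠ 0) (hur : C u r = 0) :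
    1 - C q r * C q r ≠ 0 := by
  intro h
  have ht2 : C q r * C q r = 1 := by linear_combination -h
  have hst : star (C q r) = C q r := by
    rcases mul_self_eq_one_iff.mp ht2 with h1 | h1 <;> rw [h1] <;> simp
  have hrq : C r q = C q r := by rw [← hAtr, Matrix.trace_mul_comm, hAtr]
  have hMH : (A q - C q r • A r)ᴴ = A q - C q r • A r := by
    rw [Matrix.conjTranspose_sub, Matrix.conjTranspose_smul, (hA q).1, (hA r).1, hst]
  have htr0 : ((A q - C q r • A r)ᴴ * (A q - C q r • A r)).trace = 0 := by
    rw [hMH]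
    simp only [Matrix.sub_mul, Matrix.mul_sub, Matrix.smul_mul, Matrix.mul_smul,
      Matrix.trace_sub, Matrix.trace_smul, smul_eq_mul, smul_smul, hAtr, hqq, hrr, hrq]
    linear_combination h
  have hM0 : A q - C q r • A r = 0 := stmt17.frob _ htr0
  have hqr' : A q = C q r • A r := sub_eq_zero.mp hM0
  have hfin : C u q = C q r * C u r := by
    rw [← hAtr, hqr', Matrix.mul_smul, Matrix.trace_smul, smul_eq_mul, hAtr]
  rw [hur, mul_zero] at hfin
  exact huq hfin

/-- One full step of the argument: `A q * A r = C q r • (A q * A q)`. -/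
private lemma stmt17.step {k : ℕ} (C : Matrix (Fin 5) (Fin 5) ℂ) (hrank : C.rank = 3)
    (A : Fin 5 → Matrix (Fin k) (Fin k) ℂ) (hA : ∀ i, (A i).PosSemidef)
    (hAtr : ∀ i j, (A i * A j).trace = C i j)
    (hdiag : ∀ i, C i i = 1)
    (p q r u w : Fin 5)
    (hpq : C p q = 0) (hpr : C p r = 0)
    (hqp : C q p = 0) (hqu : C q u = 0)
    (hur : C u r ≠ 0)
    (hwq : C w q ≠ 0) (hwr : C w r = 0) :
    A q * A r = C q r • (A q * A q) := by
  have ht : 1 - C q r * C q r ≠ 0 :=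
    stmt17.one_sub_sq C A hA hAtr q r w (hdiag q) (hdiag r) hwq hwr
  obtain ⟨a, b, g, hX⟩ := stmt17.span_lemma C hrank A hA hAtr p q r u hpq hpr
    (hdiag p) (hdiag q) (hdiag r) ht
  have hQP : A q * A p = 0 :=
    stmt17.mul_eq_zero_of_trace (hA q) (hA p) (by rw [hAtr]; exact hqp)
  have hQX : A q * A u = 0 :=
    stmt17.mul_eq_zero_of_trace (hA q) (hA u) (by rw [hAtr]; exact hqu)
  have := stmt17.key (A p) (A q) (A r) (A u) a b g hX hQP hQX
    (by rw [hAtr]; exact hdiag q) (by rw [hAtr]; exact hdiag r)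
    (by rw [hAtr]; exact hpr) (by rw [hAtr]; exact hur)
  rwa [hAtr] at this

open scoped Matrix in
/-- Combining the two directions of a step: the squares agree. -/
private lemma stmt17.sq_eq {k : ℕ} (C : Matrix (Fin 5) (Fin 5) ℂ)
    (A : Fin 5 → Matrix (Fin k) (Fin k) ℂ) (hA : ∀ i, (A i).PosSemidef)
    (hherm : ∀ i j, star (C j i) = C i j)
    (x y : Fin 5) (hne : C x y ≠ 0)
    (hxy : A x * A y = C x y • (A x * A x))
    (hyx : A y * A x = C y x • (A y * A y)) :
    A x * A x = A y * A y := by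
  have h1 : (A y * A x)ᴴ = A x * A y := by
    rw [Matrix.conjTranspose_mul, (hA x).1, (hA y).1]
  have h2 : A x * A y = C x y • (A y * A y) := by
    rw [← h1, hyx, Matrix.conjTranspose_smul, Matrix.conjTranspose_mul, (hA y).1, hherm]
  apply smul_right_injective _ hne
  show C x y • (A x * A x) = C x y • (A y * A y)
  rw [← hxy, ← h2]

/-- No correlation matrix of rank `3` whose orthogonality graph is the
5-cycle (the orthogonality graph of a minimal unextendible product basis in `ℂ³ ⊗ ℂ³`)
is completely positive semidefinite. -/
theorem stmt17 (C : Matrix (Fin 5) (Fin 5) ℂ) (hC : C.PosSemidef)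
    (hdiag : ∀ i, C i i = 1) (hrank : C.rank = 3)
    (hgraph : ∀ i j : Fin 5, i ≠ j →
      ((j = i + 1 ∨ j = i - 1) → C i j = 0) ∧
      ((j = i + 2 ∨ j = i - 2) → C i j ≠ 0)) :
    ¬ ∃ m : ℕ, 1 ≤ m ∧ ∃ A : Fin 5 → Matrix (Fin m) (Fin m) ℂ,
        (∀ i, (A i).PosSemidef) ∧ ∀ i j, (A i * A j).trace = C i j := by
  rintro ⟨m, hm, A, hA, hAtr⟩
  have hne1 : ∀ i j : Fin 5, (j = i + 1 ∨ j = i - 1) → i ≠ j := by decide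
  have hne2 : ∀ i j : Fin 5, (j = i + 2 ∨ j = i - 2) → i ≠ j := by decide
  have hz : ∀ i j : Fin 5, (j = i + 1 ∨ j = i - 1) → C i j = 0 :=
    fun i j h => (hgraph i j (hne1 i j h)).1 h
  have hn : ∀ i j : Fin 5, (j = i + 2 ∨ j = i - 2) → C i j ≠ 0 :=
    fun i j h => (hgraph i j (hne2 i j h)).2 h
  have hherm : ∀ i j, star (C j i) = C i j := fun i j => by
    rw [← Matrix.conjTranspose_apply, hC.1]
  have s13 : A 1 * A 3 = C 1 3 • (A 1 * A 1) :=
    stmt17.step C hrank A hA hAtr hdiag 2 1 3 0 4 (hz 2 1 (by decide)) (hz 2 3 (by decide))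
      (hz 1 2 (by decide)) (hz 1 0 (by decide)) (hn 0 3 (by decide)) (hn 4 1 (by decide))
      (hz 4 3 (by decide))
  have s31 : A 3 * A 1 = C 3 1 • (A 3 * A 3) :=
    stmt17.step C hrank A hA hAtr hdiag 2 3 1 4 0 (hz 2 3 (by decide)) (hz 2 1 (by decide))
      (hz 3 2 (by decide)) (hz 3 4 (by decide)) (hn 4 1 (by decide)) (hn 0 3 (by decide))
      (hz 0 1 (by decide))
  have s30 : A 3 * A 0 = C 3 0 • (A 3 * A 3) :=
    stmt17.step C hrank A hA hAtr hdiag 4 3 0 2 1 (hz 4 3 (by decide)) (hz 4 0 (by decide))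
      (hz 3 4 (by decide)) (hz 3 2 (by decide)) (hn 2 0 (by decide)) (hn 1 3 (by decide))
      (hz 1 0 (by decide))
  have s03 : A 0 * A 3 = C 0 3 • (A 0 * A 0) :=
    stmt17.step C hrank A hA hAtr hdiag 4 0 3 1 2 (hz 4 0 (by decide)) (hz 4 3 (by decide))
      (hz 0 4 (by decide)) (hz 0 1 (by decide)) (hn 1 3 (by decide)) (hn 2 0 (by decide))
      (hz 2 3 (by decide))
  have s02 : A 0 * A 2 = C 0 2 • (A 0 * A 0) :=
    stmt17.step C hrank A hA hAtr hdiag 1 0 2 4 3 (hz 1 0 (by decide)) (hz 1 2 (by decide))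
      (hz 0 1 (by decide)) (hz 0 4 (by decide)) (hn 4 2 (by decide)) (hn 3 0 (by decide))
      (hz 3 2 (by decide))
  have s20 : A 2 * A 0 = C 2 0 • (A 2 * A 2) :=
    stmt17.step C hrank A hA hAtr hdiag 1 2 0 3 4 (hz 1 2 (by decide)) (hz 1 0 (by decide))
      (hz 2 1 (by decide)) (hz 2 3 (by decide)) (hn 3 0 (by decide)) (hn 4 2 (by decide))
      (hz 4 0 (by decide))
  have sq13 : A 1 * A 1 = A 3 * A 3 :=
    stmt17.sq_eq C A hA hherm 1 3 (hn 1 3 (by decide)) s13 s31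
  have sq30 : A 3 * A 3 = A 0 * A 0 :=
    stmt17.sq_eq C A hA hherm 3 0 (hn 3 0 (by decide)) s30 s03
  have sq02 : A 0 * A 0 = A 2 * A 2 :=
    stmt17.sq_eq C A hA hherm 0 2 (hn 0 2 (by decide)) s02 s20
  have h12sq : A 1 * A 1 = A 2 * A 2 := (sq13.trans sq30).trans sq02
  have h12 : A 1 * A 2 = 0 :=
    stmt17.mul_eq_zero_of_trace (hA 1) (hA 2) (by rw [hAtr]; exact hz 1 2 (by decide))
  have hzero : (A 1 * A 1) * (A 2 * A 2) = 0 := by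
    rw [Matrix.mul_assoc, ← Matrix.mul_assoc (A 1) (A 2) (A 2), h12, Matrix.zero_mul,
      Matrix.mul_zero]
  have hsq0 : (A 1 * A 1) * (A 1 * A 1) = 0 := by
    nth_rewrite 2 [h12sq]
    exact hzero
  have hB : A 1 * A 1 = 0 := by
    apply stmt17.frob
    rw [Matrix.conjTranspose_mul, (hA 1).1, hsq0, Matrix.trace_zero]
  have : (1 : ℂ) = 0 := by
    rw [← hdiag 1, ← hAtr 1 1, hB, Matrix.trace_zero]
  exact one_ne_zero this
end
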